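/- Let X be a real normed space, M : X → X* bounded linear, self-adjoint and positive semi-definite, and (x^k)_{k≥0} ⊂ X with v^{k+1} := −M(x^{k+1} − x^k). Let x̄ ∈ X, δ > 0, γ ≥ 0, η ≥ 0, let Λ̆ : X → X* be self-adjoint with 0 ≤ Λ̆ ≤ (1−η)M, let (ε_k)_{k≥0} ⊂ ℝ, and let p ∈ [1, p̄]. Assume either: (a) p̄ = 1 + 2γ and, whenever x^0, …, x^k ∈ 𝔒_M(x̄, δ), ⟨v^{k+1}, x^{k+1} − x̄⟩ ≥ γ ‖x^{k+1} − x̄‖_M² − (1/2)‖x^{k+1} − x^k‖_{Λ̆}² − ε_k; or (b) p̄ = 1 + γ, there is a function 𝒢(·; x̄) : X → ℝ ∪ {+∞} with 𝒢(x; x̄) ≥ 0 for all x ∈ X, and whenever x^0, …, x^k ∈ 𝔒_M(x̄, δ), ⟨v^{k+1}, x^{k+1} − x̄⟩ ≥ 𝒢(x^{k+1}; x̄) + (γ/2)‖x^{k+1} − x̄‖_M² − (1/2)‖x^{k+1} − x^k‖_{Λ̆}² − ε_k. Assume further r_p := sup_{N∈ℕ} Σ_{k=0}^{N−1} p^{k−N}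 ε_k satisfies r_p < δ²/2, and x^0 ∈ 𝔒_M(x̄, √(δ² − 2 r_p)). Then: x^k ∈ 𝔒_M(x̄, δ) for all k ≥ 0; the quasi-Féjer inequality (p/2)‖x^{k+1} − x̄‖_M² ≤ (1/2)‖x^k − x̄‖_M² + ε_k holds for all k ≥ 0; and if η > 0 then sup_{N∈ℕ} Σ_{k=0}^{N−1} p^{k−N} ‖x^{k+1} − x^k‖_M² < ∞. -/

import Mathlib

theorem threept14 {X : Type*} [NormedAddCommGroup X] [NormedSpace ℝ X]
    (M : X →L[ℝ] StrongDual ℝ X) (hMsa : ∀ u v : X, M u v = M v u) (u v w : X) :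
    M (u - v) (u - w) * 2 = M (u - v) (u - v) + M (u - w) (u - w) - M (v - w) (v - w) := by
  have h : v - w = (u - w) - (u - v) := by abel
  rw [h]
  simp only [map_sub, ContinuousLinearMap.sub_apply]
  linarith [hMsa u v, hMsa u w, hMsa v w]

theorem aux14 (a d e : ℕ → ℝ) (p η δ rp : ℝ)
    (hp : 1 ≤ p) (hη : 0 ≤ η) (hδ : 0 < δ)
    (ha : ∀ k, 0 ≤ a k) (hd : ∀ k, 0 ≤ d k)
    (hrp : ∀ N : ℕ, ∑ k ∈ Finset.range N, p ^ k / p ^ N * e k ≤ rp)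
    (hrpδ : rp < δ ^ 2 / 2)
    (ha0 : a 0 < δ ^ 2 - 2 * rp)
    (hstep : ∀ k : ℕ, (∀ n ≤ k, Real.sqrt (a n) < δ) →
      p / 2 * a (k + 1) + η / 2 * d k ≤ 1 / 2 * a k + e k) :
    (∀ k : ℕ, Real.sqrt (a k) < δ)
    ∧ (∀ k : ℕ, p / 2 * a (k + 1) ≤ 1 / 2 * a k + e k)
    ∧ (0 < η → ∃ C : ℝ, ∀ N : ℕ,
        ∑ k ∈ Finset.range N, p ^ k / p ^ N * d k ≤ C) := by
  have hp0 : (0:ℝ) < p := by linarith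
  have hrp0 : 0 ≤ rp := by have := hrp 0; simpa using this
  have hS : ∀ N : ℕ, ∑ k ∈ Finset.range N, p ^ k * e k ≤ rp * p ^ N := by
    intro N
    have h := hrp N
    have he : ∑ k ∈ Finset.range N, p ^ k / p ^ N * e k
        = (∑ k ∈ Finset.range N, p ^ k * e k) / p ^ N := by
      rw [Finset.sum_div]
      exact Finset.sum_congr rfl fun k _ => by rw [div_mul_eq_mul_div]
    rw [he, div_le_iff₀ (pow_pos hp0 N)] at h
    exact h
  have hsq' : ∀ m : ℕ,
      p ^ m * a m ≤ a 0 + 2 * ∑ j ∈ Finset.range m, p ^ j * e j → Real.sqrt (a m) < δ := by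
    intro m hm
    have h1 := hS m
    have h2 : (1:ℝ) ≤ p ^ m := one_le_pow₀ hp
    rw [Real.sqrt_lt' hδ]
    nlinarith [ha m, ha 0]
  have Q : ∀ k : ℕ, ∀ n ≤ k, p ^ n * a n ≤ a 0 + 2 * ∑ j ∈ Finset.range n, p ^ j * e j := by
    intro k
    induction k with
    | zero => intro n hn; interval_cases n; simp
    | succ k ih =>
      intro n hn
      rcases Nat.eq_or_lt_of_le hn with h | h
      swap
      · exact ih n (Nat.lt_succ_iff.mp h)
      · subst h
        have hball : ∀ m ≤ k, Real.sqrt (a m) < δ := fun m hm => hsq' m (ih m hm)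
        have hst := hstep k hball
        have hηd : 0 ≤ η / 2 * d k := mul_nonneg (by linarith) (hd k)
        have hst' : p * a (k + 1) ≤ a k + 2 * e k := by linarith
        have hmul := mul_le_mul_of_nonneg_left hst' (pow_nonneg hp0.le k)
        have hQk := ih k le_rfl
        rw [Finset.sum_range_succ, pow_succ, mul_assoc]
        linarith [hmul, hQk]
  have hball : ∀ k : ℕ, Real.sqrt (a k) < δ := fun k => hsq' k (Q k k le_rfl)
  refine ⟨hball, ?_, ?_⟩
  · intro k
    have hst := hstep k fun n _ => hball n
    have hηd : 0 ≤ η / 2 * d k := mul_nonneg (by linarith) (hd k)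
    linarith
  · intro hη0
    refine ⟨(a 0 + 2 * rp) / η, fun N => ?_⟩
    have hper : ∀ k : ℕ, η * (p ^ k * d k)
        ≤ (p ^ k * a k - p ^ (k + 1) * a (k + 1)) + 2 * (p ^ k * e k) := by
      intro k
      have hst := hstep k fun n _ => hball n
      have h2 : η * d k ≤ a k + 2 * e k - p * a (k + 1) := by linarith
      have hmul := mul_le_mul_of_nonneg_left h2 (pow_nonneg hp0.le k)
      rw [pow_succ, mul_assoc]
      linarith [hmul]
    have hsum := Finset.sum_le_sum (fun k (_ : k ∈ Finset.range N) => hper k)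
    rw [← Finset.mul_sum] at hsum
    have htel : ∑ k ∈ Finset.range N,
        ((p ^ k * a k - p ^ (k + 1) * a (k + 1)) + 2 * (p ^ k * e k))
        = (p ^ 0 * a 0 - p ^ N * a N) + 2 * ∑ k ∈ Finset.range N, p ^ k * e k := by
      rw [Finset.sum_add_distrib, Finset.sum_range_sub' (fun k => p ^ k * a k) N,
        ← Finset.mul_sum]
    rw [htel] at hsum
    have hSN := hS N
    have hT : η * ∑ k ∈ Finset.range N, p ^ k * d k ≤ (a 0 + 2 * rp) * p ^ N := by
      have h2 : (1:ℝ) ≤ p ^ N := one_le_pow₀ hp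
      nlinarith [ha N, ha 0, pow_pos hp0 N]
    have he : ∑ k ∈ Finset.range N, p ^ k / p ^ N * d k
        = (∑ k ∈ Finset.range N, p ^ k * d k) / p ^ N := by
      rw [Finset.sum_div]
      exact Finset.sum_congr rfl fun k _ => by rw [div_mul_eq_mul_div]
    rw [he, div_le_div_iff₀ (pow_pos hp0 N) hη0]
    nlinarith [hT]

theorem stmt14 {X : Type*} [NormedAddCommGroup X] [NormedSpace ℝ X]
    (M : X →L[ℝ] StrongDual ℝ X)
    (hMsa : ∀ u v : X, M u v = M v u) (hMpsd : ∀ u : X, 0 ≤ M u u)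
    (x : ℕ → X) (xb : X) (δ γ η : ℝ)
    (hδ : 0 < δ) (hγ : 0 ≤ γ) (hη : 0 ≤ η)
    (Λb : X →L[ℝ] StrongDual ℝ X)
    (hΛbsa : ∀ u v : X, Λb u v = Λb v u)
    (hΛbpsd : ∀ u : X, 0 ≤ Λb u u)
    (hΛbM : ∀ u : X, Λb u u ≤ (1 - η) * M u u)
    (ε : ℕ → ℝ) (p pbar : ℝ) (hp1 : 1 ≤ p) (hppbar : p ≤ pbar)
    (halt :
      (pbar = 1 + 2 * γ ∧
        ∀ k : ℕ, (∀ n ≤ k, Real.sqrt (M (x n - xb) (x n - xb)) < δ) →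
          γ * M (x (k + 1) - xb) (x (k + 1) - xb)
              - (1 / 2) * Λb (x (k + 1) - x k) (x (k + 1) - x k) - ε k
            ≤ (-(M (x (k + 1) - x k))) (x (k + 1) - xb))
      ∨
      (pbar = 1 + γ ∧
        ∃ gap : X → EReal, (∀ u : X, 0 ≤ gap u) ∧
          ∀ k : ℕ, (∀ n ≤ k, Real.sqrt (M (x n - xb) (x n - xb)) < δ) →
            gap (x (k + 1))
                + (((γ / 2) * M (x (k + 1) - xb) (x (k + 1) - xb)
                    - (1 / 2) * Λb (x (k + 1) - x k) (x (k + 1) - x k) - ε k : ℝ) : EReal)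
              ≤ (((-(M (x (k + 1) - x k))) (x (k + 1) - xb) : ℝ) : EReal)))
    (rp : ℝ)
    (hrp : ∀ N : ℕ, ∑ k ∈ Finset.range N, p ^ k / p ^ N * ε k ≤ rp)
    (hrpδ : rp < δ ^ 2 / 2)
    (hx0 : Real.sqrt (M (x 0 - xb) (x 0 - xb)) < Real.sqrt (δ ^ 2 - 2 * rp)) :
    (∀ k : ℕ, Real.sqrt (M (x k - xb) (x k - xb)) < δ)
    ∧ (∀ k : ℕ,
        p / 2 * M (x (k + 1) - xb) (x (k + 1) - xb)
          ≤ 1 / 2 * M (x k - xb) (x k - xb) + ε k)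
    ∧ (0 < η → ∃ C : ℝ, ∀ N : ℕ,
        ∑ k ∈ Finset.range N, p ^ k / p ^ N * M (x (k + 1) - x k) (x (k + 1) - x k) ≤ C) := by
  have ha0 : M (x 0 - xb) (x 0 - xb) < δ ^ 2 - 2 * rp := by
    have h0 := hMpsd (x 0 - xb)
    have hpos : 0 < δ ^ 2 - 2 * rp := by linarith
    nlinarith [Real.sq_sqrt h0, Real.sq_sqrt hpos.le, Real.sqrt_nonneg (M (x 0 - xb) (x 0 - xb)),
      Real.sqrt_nonneg (δ ^ 2 - 2 * rp)]
  have hstep : ∀ k : ℕ, (∀ n ≤ k, Real.sqrt (M (x n - xb) (x n - xb)) < δ) →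
      p / 2 * M (x (k + 1) - xb) (x (k + 1) - xb)
        + η / 2 * M (x (k + 1) - x k) (x (k + 1) - x k)
      ≤ 1 / 2 * M (x k - xb) (x k - xb) + ε k := by
    intro k hball
    have htp := threept14 M hMsa (x (k + 1)) (x k) xb
    have hΛ := hΛbM (x (k + 1) - x k)
    have hM1 := hMpsd (x (k + 1) - xb)
    rcases halt with ⟨hpb, hA⟩ | ⟨hpb, gap, hg0, hB⟩
    · have h := hA k hball
      rw [ContinuousLinearMap.neg_apply] at h
      nlinarith [mul_nonneg (sub_nonneg.mpr hppbar) hM1]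
    · have h := hB k hball
      have h' : (((γ / 2) * M (x (k + 1) - xb) (x (k + 1) - xb)
            - (1 / 2) * Λb (x (k + 1) - x k) (x (k + 1) - x k) - ε k : ℝ) : EReal)
          ≤ (((-(M (x (k + 1) - x k))) (x (k + 1) - xb) : ℝ) : EReal) :=
        le_trans (le_add_of_nonneg_left (hg0 _)) h
      have hcr : (γ / 2) * M (x (k + 1) - xb) (x (k + 1) - xb)
            - (1 / 2) * Λb (x (k + 1) - x k) (x (k + 1) - x k) - ε k
          ≤ (-(M (x (k + 1) - x k))) (x (k + 1) - xb) := by exact_mod_cast h'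
      rw [ContinuousLinearMap.neg_apply] at hcr
      nlinarith [mul_nonneg (sub_nonneg.mpr hppbar) hM1]
  exact aux14 (fun k => M (x k - xb) (x k - xb))
    (fun k => M (x (k + 1) - x k) (x (k + 1) - x k)) ε p η δ rp hp1 hη hδ
    (fun k => hMpsd _) (fun k => hMpsd _) hrp hrpδ ha0 hstep
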